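/- Let G be a finite simple graph with near-far-labeling (N,F). Suppose there exist a partition {A,B} of the vertex set of G and a set M ⊆ E(G) such that: (i) every edge of the induced subgraph G[A] belongs to N; (ii) every cycle of the induced subgraph G[B] contains an even number of edges from F; (iii) M is an induced matching (the vertex sets of any two distinct edges of M are at distance at least 2) and every edge of M joins a vertex of A to a vertex of B; and (iv) for every pair of edges ab, a'b ∈ E(G) \ M with a, a' ∈ A and b ∈ B, either both ab, a'b ∈ N or both ab, a'b ∈ F. Then G admits a (13,4)-threshold-coloring with respect to (N,F); moreover, if M = ∅ then G admits a (5,1)-threshold-coloring with respect to (N,F). -/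

import Mathlib

/-- An `(r,t)`-threshold-coloring of the graph `G` with respect to the near-far-labeling
`(N, G.edgeSet \ N)`: a coloring with colors `{0, …, r-1}` such that the colors of the
endvertices of each near edge differ by at most `t`, and the colors of the endvertices of
each far edge differ by more than `t`. -/
def IsThresholdColoring {V : Type*} (G : SimpleGraph V) (N : Set (Sym2 V))
    (r t : ℕ) (c : V → ℕ) : Prop :=
  (∀ v, c v < r) ∧
  (∀ ⦃u v⦄, G.Adj u v → s(u, v) ∈ N → |(c u : ℤ) - (c v : ℤ)| ≤ (t : ℤ)) ∧
  (∀ ⦃u v⦄, G.Adj u v → s(u, v) ∉ N → (t : ℤ) < |(c u : ℤ) - (c v : ℤ)|)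


namespace Zigzag

open SimpleGraph

variable {V : Type*}

variable {V : Type*}

open Classical in
/-- The number of "far" edges (edges not in `N`) of a walk. -/
noncomputable def fc (N : Set (Sym2 V)) {G : SimpleGraph V} {u v : V} (p : G.Walk u v) : ℕ :=
  p.edges.countP (fun e => decide (e ∉ N))

open Classical in
lemma fc_cons (N : Set (Sym2 V)) {G : SimpleGraph V} {u v w : V} (h : G.Adj u v)
    (p : G.Walk v w) :
    fc N (Walk.cons h p) = fc N p + (if s(u, v) ∉ N then 1 else 0) := by
  simp [fc, Walk.edges_cons, List.countP_cons]

open Classical in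
lemma fc_append (N : Set (Sym2 V)) {G : SimpleGraph V} {u v w : V} (p : G.Walk u v)
    (q : G.Walk v w) : fc N (p.append q) = fc N p + fc N q := by
  simp [fc, Walk.edges_append, List.countP_append]

open Classical in
lemma fc_reverse (N : Set (Sym2 V)) {G : SimpleGraph V} {u v : V} (p : G.Walk u v) :
    fc N p.reverse = fc N p := by
  simp [fc, Walk.edges_reverse, List.countP_eq_length_filter, List.filter_reverse]

open Classical in
lemma fc_copy (N : Set (Sym2 V)) {G : SimpleGraph V} {u v u' v' : V} (p : G.Walk u v)
    (hu : u = u') (hv : v = v') : fc N (p.copy hu hv) = fc N p := by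
  subst hu; subst hv; rfl

lemma split_closed [DecidableEq V] (N : Set (Sym2 V)) {K : SimpleGraph V} {w : V}
    (q : K.Walk w w) (hcount : 2 ≤ q.support.tail.count w) :
    ∃ (c1 c2 : K.Walk w w), fc N q = fc N c1 + fc N c2 ∧
      c1.length + c2.length = q.length ∧ 1 ≤ c1.length ∧ 1 ≤ c2.length := by
  cases q with
  | nil => simp at hcount
  | @cons _ x _ h q' =>
    have hsupp : 2 ≤ q'.support.count w := by simpa using hcount
    have hw : w ∈ q'.support := by
      have : 0 < q'.support.count w := by omega
      exact List.count_pos_iff.mp this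
    have hspec : (q'.takeUntil w hw).append (q'.dropUntil w hw) = q' := q'.take_spec hw
    have h1 : (q'.takeUntil w hw).support.count w = 1 := q'.count_support_takeUntil_eq_one hw
    have hsupp2 : List.count w q'.support = List.count w (q'.takeUntil w hw).support
        + List.count w (q'.dropUntil w hw).support.tail := by
      have hcc : List.count w q'.support
          = List.count w ((q'.takeUntil w hw).append (q'.dropUntil w hw)).support := by
        rw [hspec]
      rw [Walk.support_append, List.count_append] at hcc
      exact hcc
    have hlen : (q'.takeUntil w hw).length + (q'.dropUntil w hw).length = q'.length := by
      have hcc := congrArg Walk.length hspec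
      rw [Walk.length_append] at hcc
      exact hcc
    have hd : 1 ≤ (q'.dropUntil w hw).length := by
      have hcnt : 1 ≤ ((q'.dropUntil w hw).support.tail).count w := by
        rw [hsupp2] at hsupp; omega
      have hle := List.count_le_length (a := w) (l := (q'.dropUntil w hw).support.tail)
      have hls := (q'.dropUntil w hw).length_support
      have ht : (q'.dropUntil w hw).support.tail.length
          = (q'.dropUntil w hw).support.length - 1 := by
        simp [List.length_tail]
      omega
    refine ⟨Walk.cons h (q'.takeUntil w hw), q'.dropUntil w hw, ?_, ?_, by simp, hd⟩
    · have hfc2 : fc N q' = fc N (q'.takeUntil w hw) + fc N (q'.dropUntil w hw) := by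
        rw [← fc_append, hspec]
      rw [fc_cons, hfc2, fc_cons]; ring
    · simp only [Walk.length_cons]; omega

lemma closed_nodup_support_nil {K : SimpleGraph V} {v : V} (q : K.Walk v v)
    (h : q.support.Nodup) : q.edges = [] := by
  cases q with
  | nil => rfl
  | @cons _ x _ hadj q' =>
    exfalso
    have hx : v ∈ q'.support := q'.end_mem_support
    rw [Walk.support_cons] at h
    exact (List.nodup_cons.mp h).1 hx

lemma edge_end_aux {K : SimpleGraph V} : ∀ {x v : V} (q : K.Walk x v), q.support.Nodup →
    s(v, x) ∈ q.edges → q.edges = [s(x, v)] := by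
  intro x v q
  induction q with
  | nil => simp
  | @cons a b c h q' ih =>
    intro hnd hmem
    rw [Walk.edges_cons, List.mem_cons] at hmem
    rcases hmem with heq | hmem
    · rcases Sym2.eq_iff.mp heq with ⟨hca, hab⟩ | ⟨hcb, -⟩
      · exact absurd (hab ▸ h) (K.loopless.irrefl _)
      · subst hcb
        rw [Walk.support_cons] at hnd
        have he : q'.edges = [] := closed_nodup_support_nil q' (List.nodup_cons.mp hnd).2
        rw [Walk.edges_cons, he]
    · exfalso
      have hx : a ∈ q'.support := Walk.snd_mem_support_of_mem_edges q' hmem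
      rw [Walk.support_cons] at hnd
      exact (List.nodup_cons.mp hnd).1 hx

open Classical in
lemma even_fc_closed [DecidableEq V] (N : Set (Sym2 V)) {K : SimpleGraph V}
    (hcyc : ∀ (w : V) (p : K.Walk w w), p.IsCycle → Even (fc N p)) :
    ∀ (n : ℕ) (v : V) (p : K.Walk v v), p.length ≤ n → Even (fc N p) := by
  intro n
  induction n with
  | zero =>
    intro v p hp
    have h1 : p.edges = [] := by
      apply List.length_eq_zero_iff.mp
      rw [Walk.length_edges]; omega
    simp [fc, h1]
  | succ n ih =>
    intro v p hp
    rcases Nat.lt_or_ge p.length (n + 1) with hlt | hge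
    · exact ih v p (by omega)
    have hlen : p.length = n + 1 := le_antisymm hp hge
    by_cases hnd : p.support.tail.Nodup
    · cases p with
      | nil => simp at hlen
      | @cons _ x _ h p' =>
        have hpath : p'.IsPath := (Walk.isPath_def _).mpr (by simpa using hnd)
        by_cases he : s(v, x) ∈ p'.edges
        · have hed : p'.edges = [s(x, v)] := edge_end_aux p' ((Walk.isPath_def _).mp hpath) he
          rw [fc_cons]
          have h2 : fc N p' = if s(x, v) ∉ N then 1 else 0 := by
            simp [fc, hed, List.countP_cons]
          rw [h2, show s(x, v) = s(v, x) from Sym2.eq_swap]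
          by_cases hN : s(v, x) ∈ N <;> simp [hN]
        · exact hcyc v _ ((Walk.cons_isCycle_iff p' h).mpr ⟨hpath, he⟩)
    · obtain ⟨w, hw2⟩ : ∃ w, 2 ≤ p.support.tail.count w := by
        by_contra hcon
        push_neg at hcon
        exact hnd (List.nodup_iff_count_le_one.mpr fun a => by have := hcon a; omega)
      have hwsup : w ∈ p.support :=
        List.mem_of_mem_tail (List.count_pos_iff.mp (by omega))
      have hqe : fc N (p.rotate w hwsup) = fc N p :=
        List.Perm.countP_eq _ (p.rotate_edges w hwsup).perm
      have hql : (p.rotate w hwsup).length = p.length := by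
        rw [← Walk.length_edges, ← Walk.length_edges]
        exact (p.rotate_edges w hwsup).perm.length_eq
      have hqc : 2 ≤ (p.rotate w hwsup).support.tail.count w := by
        rw [(p.support_rotate w hwsup).perm.count_eq]; exact hw2
      obtain ⟨c1, c2, hfc, hsum, h1, h2⟩ := split_closed N (p.rotate w hwsup) hqc
      have e1 := ih w c1 (by omega)
      have e2 := ih w c2 (by omega)
      rw [← hqe, hfc]
      exact e1.add e2

lemma exists_sign {K : SimpleGraph V} (N : Set (Sym2 V))
    (hcyc : ∀ (w : V) (p : K.Walk w w), p.IsCycle → Even (fc N p)) :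
    ∃ σ : V → ZMod 2, ∀ u v, K.Adj u v → (σ u = σ v ↔ s(u, v) ∈ N) := by
  classical
  have hroot : ∀ C : K.ConnectedComponent,
      K.connectedComponentMk C.exists_rep.choose = C := fun C => C.exists_rep.choose_spec
  have hreach : ∀ v : V,
      K.Reachable (K.connectedComponentMk v).exists_rep.choose v := by
    intro v
    exact ConnectedComponent.exact (hroot _)
  let wk : ∀ v : V, K.Walk (K.connectedComponentMk v).exists_rep.choose v :=
    fun v => (hreach v).some
  refine ⟨fun v => (fc N (wk v) : ZMod 2), ?_⟩
  intro u v huv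
  have hcc : K.connectedComponentMk u = K.connectedComponentMk v :=
    ConnectedComponent.connectedComponentMk_eq_of_adj huv
  have hcc' : (K.connectedComponentMk v).exists_rep.choose
      = (K.connectedComponentMk u).exists_rep.choose := by rw [hcc]
  let q : K.Walk v (K.connectedComponentMk u).exists_rep.choose :=
    (wk v).reverse.copy rfl hcc'
  let c : K.Walk (K.connectedComponentMk u).exists_rep.choose
      (K.connectedComponentMk u).exists_rep.choose := (wk u).append (Walk.cons huv q)
  have hev : Even (fc N c) := even_fc_closed N hcyc c.length _ c le_rfl
  have hfc : fc N c = fc N (wk u) + ((if s(u, v) ∉ N then 1 else 0) + fc N (wk v)) := by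
    show fc N ((wk u).append (Walk.cons huv q)) = _
    rw [fc_append, fc_cons]
    have : fc N q = fc N (wk v) := by
      show fc N ((wk v).reverse.copy rfl hcc') = _
      rw [fc_copy, fc_reverse]
    rw [this]; ring
  rw [hfc] at hev
  have hz : ((fc N (wk u) + ((if s(u, v) ∉ N then 1 else 0) + fc N (wk v)) : ℕ) : ZMod 2)
      = 0 := by
    rw [ZMod.natCast_eq_zero_iff]
    exact hev.two_dvd
  push_cast at hz
  by_cases hn : s(u, v) ∈ N
  · rw [if_neg (not_not_intro hn)] at hz
    push_cast at hz
    have hkey : ∀ a b : ZMod 2, a + (0 + b) = 0 → a = b := by decide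
    simp only [hn, iff_true]
    exact hkey _ _ hz
  · rw [if_pos hn] at hz
    push_cast at hz
    have hkey : ∀ a b : ZMod 2, a + (1 + b) = 0 → ¬(a = b) := by decide
    simp only [hn, iff_false]
    exact hkey _ _ hz


def mEnd (M : Set (Sym2 V)) (v : V) : Prop := ∃ w, s(v, w) ∈ M

def eps (G : SimpleGraph V) (N M : Set (Sym2 V)) (A : Set V) (b : V) : Prop :=
  ∃ a, a ∈ A ∧ G.Adj a b ∧ s(a, b) ∉ M ∧ s(a, b) ∈ N

open Classical in
noncomputable def c13 (G : SimpleGraph V) (N M : Set (Sym2 V)) (A : Set V)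
    (σ : V → ZMod 2) (v : V) : ℕ :=
  if v ∈ A then
    if h : mEnd M v then
      (if σ h.choose = 0 then
        (if eps G N M A h.choose then (if s(v, h.choose) ∈ N then 6 else 7)
         else (if s(v, h.choose) ∈ N then 5 else 6))
       else
        (if eps G N M A h.choose then (if s(v, h.choose) ∈ N then 6 else 5)
         else (if s(v, h.choose) ∈ N then 7 else 6)))
    else 6
  else
    if h : mEnd M v then
      (if σ v = 0 then
        (if eps G N M A v then (if s(v, h.choose) ∈ N then 3 else 2)
         else (if s(v, h.choose) ∈ N then 1 else 0))
       else
        (if eps G N M A v then (if s(v, h.choose) ∈ N then 9 else 10)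
         else (if s(v, h.choose) ∈ N then 11 else 12)))
    else
      (if σ v = 0 then (if eps G N M A v then 3 else 0)
       else (if eps G N M A v then 9 else 12))

lemma c13_works (G : SimpleGraph V) (N : Set (Sym2 V)) (A : Set V) (M : Set (Sym2 V))
    (hME : M ⊆ G.edgeSet)
    (hA : ∀ ⦃u v⦄, G.Adj u v → u ∈ A → v ∈ A → s(u, v) ∈ N)
    (hMind : ∀ e ∈ M, ∀ f ∈ M, e ≠ f → ∀ u ∈ e, ∀ v ∈ f, u ≠ v ∧ ¬ G.Adj u v)
    (hMAB : ∀ e ∈ M, ∃ a b, a ∈ A ∧ b ∉ A ∧ e = s(a, b))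
    (hiv : ∀ ⦃a a' b⦄, a ∈ A → a' ∈ A → b ∉ A → G.Adj a b → G.Adj a' b →
      s(a, b) ∉ M → s(a', b) ∉ M → (s(a, b) ∈ N ↔ s(a', b) ∈ N))
    (σ : V → ZMod 2)
    (hσ : ∀ u v, G.Adj u v → u ∉ A → v ∉ A → (σ u = σ v ↔ s(u, v) ∈ N)) :
    IsThresholdColoring G N 13 4 (c13 G N M A σ) := by
  classical
  -- uniqueness of the M-partner
  have huniq : ∀ v w w', s(v, w) ∈ M → s(v, w') ∈ M → s(v, w) = s(v, w') := by
    intro v w w' h1 h2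
    by_contra hne
    exact (hMind _ h1 _ h2 hne v (Sym2.mem_iff.mpr (Or.inl rfl))
      v (Sym2.mem_iff.mpr (Or.inl rfl))).1 rfl
  have hchA : ∀ a b (hma : mEnd M a), a ∈ A → b ∉ A → s(a, b) ∈ M → hma.choose = b := by
    intro a b hma haA hbA hab
    have h1 : s(a, hma.choose) ∈ M := hma.choose_spec
    rcases Sym2.eq_iff.mp (huniq a hma.choose b h1 hab) with ⟨-, h⟩ | ⟨h1', -⟩
    · exact h
    · exact absurd (h1' ▸ haA) hbA
  have hchB : ∀ a b (hmb : mEnd M b), a ∈ A → b ∉ A → s(a, b) ∈ M → hmb.choose = a := by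
    intro a b hmb haA hbA hab
    have h1 : s(b, hmb.choose) ∈ M := hmb.choose_spec
    have h2 : s(b, a) ∈ M := by rwa [Sym2.eq_swap]
    rcases Sym2.eq_iff.mp (huniq b hmb.choose a h1 h2) with ⟨-, h⟩ | ⟨h1', -⟩
    · exact h
    · exact absurd (h1' ▸ haA) hbA
  have hnotboth : ∀ a b, a ∈ A → b ∉ A → G.Adj a b → s(a, b) ∉ M →
      ¬(mEnd M a ∧ mEnd M b) := by
    rintro a b haA hbA hadj hm ⟨⟨w, hw⟩, ⟨w', hw'⟩⟩
    by_cases heq : s(a, w) = s(b, w')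
    · have hbmem : b ∈ s(a, w) := by
        rw [heq]; exact Sym2.mem_iff.mpr (Or.inl rfl)
      rcases Sym2.mem_iff.mp hbmem with h | h
      · exact hbA (h ▸ haA)
      · exact hm (by rw [h]; exact hw)
    · exact (hMind _ hw _ hw' heq a (Sym2.mem_iff.mpr (Or.inl rfl))
        b (Sym2.mem_iff.mpr (Or.inl rfl))).2 hadj
  -- value bounds
  have hv13 : ∀ v, c13 G N M A σ v < 13 := by
    intro v
    simp only [c13]
    split_ifs <;> omega
  have hA57 : ∀ v ∈ A, 5 ≤ c13 G N M A σ v ∧ c13 G N M A σ v ≤ 7 := by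
    intro v hv
    simp only [c13, if_pos hv]
    split_ifs <;> omega
  have hA6 : ∀ v ∈ A, ¬ mEnd M v → c13 G N M A σ v = 6 := by
    intro v hv hm
    simp only [c13, if_pos hv, dif_neg hm]
  have hB0 : ∀ v, v ∉ A → σ v = 0 → c13 G N M A σ v ≤ 3 := by
    intro v hv h0
    simp only [c13, if_neg hv]
    split_ifs <;> first | omega | tauto
  have hB1 : ∀ v, v ∉ A → σ v ≠ 0 → 9 ≤ c13 G N M A σ v ∧ c13 G N M A σ v ≤ 12 := by
    intro v hv h0
    simp only [c13, if_neg hv]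
    split_ifs <;> first | omega | tauto
  have hBe : ∀ v, v ∉ A → eps G N M A v →
      2 ≤ c13 G N M A σ v ∧ c13 G N M A σ v ≤ 10 := by
    intro v hv he
    simp only [c13, if_neg hv]
    split_ifs <;> first | omega | tauto
  have hBne : ∀ v, v ∉ A → ¬ eps G N M A v →
      c13 G N M A σ v ≤ 1 ∨ 11 ≤ c13 G N M A σ v := by
    intro v hv he
    simp only [c13, if_neg hv]
    split_ifs <;> first | omega | tauto
  have hBnmT : ∀ v, v ∉ A → ¬ mEnd M v → eps G N M A v →
      c13 G N M A σ v = 3 ∨ c13 G N M A σ v = 9 := by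
    intro v hv hm he
    simp only [c13, if_neg hv, dif_neg hm]
    split_ifs <;> first | omega | tauto
  have hBnmF : ∀ v, v ∉ A → ¬ mEnd M v → ¬ eps G N M A v →
      c13 G N M A σ v = 0 ∨ c13 G N M A σ v = 12 := by
    intro v hv hm he
    simp only [c13, if_neg hv, dif_neg hm]
    split_ifs <;> first | omega | tauto
  -- the matched-edge case
  have hMcase : ∀ a b, a ∈ A → b ∉ A → s(a, b) ∈ M →
      ((s(a, b) ∈ N → (c13 G N M A σ a ≤ c13 G N M A σ b + 4 ∧
          c13 G N M A σ b ≤ c13 G N M A σ a + 4)) ∧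
       (s(a, b) ∉ N → (c13 G N M A σ b + 4 < c13 G N M A σ a ∨
          c13 G N M A σ a + 4 < c13 G N M A σ b))) := by
    intro a b ha hb hab
    have hma : mEnd M a := ⟨b, hab⟩
    have hmb : mEnd M b := ⟨a, by rwa [Sym2.eq_swap]⟩
    have h1 : hma.choose = b := hchA a b hma ha hb hab
    have h2 : hmb.choose = a := hchB a b hmb ha hb hab
    have hca : c13 G N M A σ a =
        (if σ b = 0 then
          (if eps G N M A b then (if s(a, b) ∈ N then 6 else 7)
           else (if s(a, b) ∈ N then 5 else 6))
         else
          (if eps G N M A b then (if s(a, b) ∈ N then 6 else 5)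
           else (if s(a, b) ∈ N then 7 else 6))) := by
      simp only [c13, if_pos ha, dif_pos hma, h1]
    have hcb : c13 G N M A σ b =
        (if σ b = 0 then
          (if eps G N M A b then (if s(a, b) ∈ N then 3 else 2)
           else (if s(a, b) ∈ N then 1 else 0))
         else
          (if eps G N M A b then (if s(a, b) ∈ N then 9 else 10)
           else (if s(a, b) ∈ N then 11 else 12))) := by
      simp only [c13, if_neg hb, dif_pos hmb, h2]
      rw [show s(b, a) = s(a, b) from Sym2.eq_swap]
    rw [hca, hcb]
    constructor <;> intro hn <;> split_ifs <;> first | omega | tauto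
  have hlabel : ∀ a b, a ∈ A → b ∉ A → G.Adj a b → s(a, b) ∉ M →
      (s(a, b) ∈ N ↔ eps G N M A b) := by
    intro a b ha hb hadj hm
    constructor
    · intro hn; exact ⟨a, ha, hadj, hm, hn⟩
    · rintro ⟨a', h1, h2, h3, h4⟩
      exact (hiv ha h1 hb hadj h2 hm h3).mpr h4
  have hABcase : ∀ a b, a ∈ A → b ∉ A → G.Adj a b →
      ((s(a, b) ∈ N ∧ c13 G N M A σ a ≤ c13 G N M A σ b + 4 ∧
          c13 G N M A σ b ≤ c13 G N M A σ a + 4) ∨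
       (s(a, b) ∉ N ∧ (c13 G N M A σ b + 4 < c13 G N M A σ a ∨
          c13 G N M A σ a + 4 < c13 G N M A σ b))) := by
    intro a b ha hb hadj
    by_cases hm : s(a, b) ∈ M
    · rcases hMcase a b ha hb hm with ⟨hnear, hfar⟩
      by_cases hn : s(a, b) ∈ N
      · exact Or.inl ⟨hn, hnear hn⟩
      · exact Or.inr ⟨hn, hfar hn⟩
    · have hlab := hlabel a b ha hb hadj hm
      have h57 := hA57 a ha
      by_cases hmb : mEnd M b
      · have hnma : ¬ mEnd M a := fun hma => hnotboth a b ha hb hadj hm ⟨hma, hmb⟩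
        have h6 := hA6 a ha hnma
        by_cases he : eps G N M A b
        · have := hBe b hb he
          exact Or.inl ⟨hlab.mpr he, by omega⟩
        · have := hBne b hb he
          exact Or.inr ⟨fun hn => he (hlab.mp hn), by omega⟩
      · by_cases he : eps G N M A b
        · have := hBnmT b hb hmb he
          exact Or.inl ⟨hlab.mpr he, by omega⟩
        · have := hBnmF b hb hmb he
          exact Or.inr ⟨fun hn => he (hlab.mp hn), by omega⟩
  have key : ∀ u v, G.Adj u v →
      ((s(u, v) ∈ N ∧ c13 G N M A σ u ≤ c13 G N M A σ v + 4 ∧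
          c13 G N M A σ v ≤ c13 G N M A σ u + 4) ∨
       (s(u, v) ∉ N ∧ (c13 G N M A σ v + 4 < c13 G N M A σ u ∨
          c13 G N M A σ u + 4 < c13 G N M A σ v))) := by
    intro u v huv
    by_cases hu : u ∈ A <;> by_cases hv : v ∈ A
    · refine Or.inl ⟨hA huv hu hv, ?_⟩
      have h1 := hA57 u hu; have h2 := hA57 v hv; omega
    · exact hABcase u v hu hv huv
    · have h := hABcase v u hv hu huv.symm
      rw [show s(v, u) = s(u, v) from Sym2.eq_swap] at h
      rcases h with ⟨h1, h2⟩ | ⟨h1, h2⟩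
      · exact Or.inl ⟨h1, by omega⟩
      · exact Or.inr ⟨h1, by omega⟩
    · have hiff := hσ u v huv hu hv
      by_cases hs : σ u = σ v
      · refine Or.inl ⟨hiff.mp hs, ?_⟩
        by_cases h0 : σ u = 0
        · have hb1 := hB0 u hu h0
          have hb2 := hB0 v hv (by rw [← hs]; exact h0)
          omega
        · have hb1 := hB1 u hu h0
          have hb2 := hB1 v hv (by rw [← hs]; exact h0)
          omega
      · refine Or.inr ⟨fun hn => hs (hiff.mpr hn), ?_⟩
        have hcases : (σ u = 0 ∧ σ v ≠ 0) ∨ (σ u ≠ 0 ∧ σ v = 0) := by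
          revert hs
          generalize σ u = x; generalize σ v = y
          revert x y; decide
        rcases hcases with ⟨h1, h2⟩ | ⟨h1, h2⟩
        · have hb1 := hB0 u hu h1; have hb2 := hB1 v hv h2; omega
        · have hb1 := hB1 u hu h1; have hb2 := hB0 v hv h2; omega
  refine ⟨hv13, ?_, ?_⟩
  · intro u v huv hn
    rcases key u v huv with ⟨-, h1, h2⟩ | ⟨hn', -⟩
    · rw [abs_le]; constructor <;> omega
    · exact absurd hn hn'
  · intro u v huv hn
    rcases key u v huv with ⟨hn', -⟩ | ⟨-, h⟩
    · exact absurd hn' hn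
    · rw [lt_abs]
      rcases h with h | h
      · left; omega
      · right; omega


open Classical in
noncomputable def c5 (G : SimpleGraph V) (N M : Set (Sym2 V)) (A : Set V)
    (σ : V → ZMod 2) (v : V) : ℕ :=
  if v ∈ A then 2
  else if σ v = 0 then (if eps G N M A v then 1 else 0)
  else (if eps G N M A v then 3 else 4)

lemma c5_works (G : SimpleGraph V) (N : Set (Sym2 V)) (A : Set V) (M : Set (Sym2 V))
    (hMe : M = ∅)
    (hA : ∀ ⦃u v⦄, G.Adj u v → u ∈ A → v ∈ A → s(u, v) ∈ N)
    (hiv : ∀ ⦃a a' b⦄, a ∈ A → a' ∈ A → b ∉ A → G.Adj a b → G.Adj a' b →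
      s(a, b) ∉ M → s(a', b) ∉ M → (s(a, b) ∈ N ↔ s(a', b) ∈ N))
    (σ : V → ZMod 2)
    (hσ : ∀ u v, G.Adj u v → u ∉ A → v ∉ A → (σ u = σ v ↔ s(u, v) ∈ N)) :
    IsThresholdColoring G N 5 1 (c5 G N M A σ) := by
  classical
  have hv5 : ∀ v, c5 G N M A σ v < 5 := by
    intro v; simp only [c5]; split_ifs <;> omega
  have hA2 : ∀ v ∈ A, c5 G N M A σ v = 2 := by
    intro v hv; simp only [c5, if_pos hv]
  have hB0 : ∀ v, v ∉ A → σ v = 0 → c5 G N M A σ v ≤ 1 := by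
    intro v hv h0; simp only [c5, if_neg hv]
    split_ifs <;> first | omega | tauto
  have hB1 : ∀ v, v ∉ A → σ v ≠ 0 → 3 ≤ c5 G N M A σ v ∧ c5 G N M A σ v ≤ 4 := by
    intro v hv h0; simp only [c5, if_neg hv]
    split_ifs <;> first | omega | tauto
  have hBe : ∀ v, v ∉ A → eps G N M A v → c5 G N M A σ v = 1 ∨ c5 G N M A σ v = 3 := by
    intro v hv he; simp only [c5, if_neg hv]
    split_ifs <;> first | omega | tauto
  have hBne : ∀ v, v ∉ A → ¬ eps G N M A v → c5 G N M A σ v = 0 ∨ c5 G N M A σ v = 4 := by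
    intro v hv he; simp only [c5, if_neg hv]
    split_ifs <;> first | omega | tauto
  have hlabel : ∀ a b, a ∈ A → b ∉ A → G.Adj a b → (s(a, b) ∈ N ↔ eps G N M A b) := by
    intro a b ha hb hadj
    have hm : s(a, b) ∉ M := by rw [hMe]; exact Set.notMem_empty _
    constructor
    · intro hn; exact ⟨a, ha, hadj, hm, hn⟩
    · rintro ⟨a', h1, h2, h3, h4⟩
      exact (hiv ha h1 hb hadj h2 hm h3).mpr h4
  have hABcase : ∀ a b, a ∈ A → b ∉ A → G.Adj a b →
      ((s(a, b) ∈ N ∧ c5 G N M A σ a ≤ c5 G N M A σ b + 1 ∧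
          c5 G N M A σ b ≤ c5 G N M A σ a + 1) ∨
       (s(a, b) ∉ N ∧ (c5 G N M A σ b + 1 < c5 G N M A σ a ∨
          c5 G N M A σ a + 1 < c5 G N M A σ b))) := by
    intro a b ha hb hadj
    have h2 := hA2 a ha
    have hlab := hlabel a b ha hb hadj
    by_cases he : eps G N M A b
    · have := hBe b hb he
      exact Or.inl ⟨hlab.mpr he, by omega⟩
    · have := hBne b hb he
      exact Or.inr ⟨fun hn => he (hlab.mp hn), by omega⟩
  have key : ∀ u v, G.Adj u v →
      ((s(u, v) ∈ N ∧ c5 G N M A σ u ≤ c5 G N M A σ v + 1 ∧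
          c5 G N M A σ v ≤ c5 G N M A σ u + 1) ∨
       (s(u, v) ∉ N ∧ (c5 G N M A σ v + 1 < c5 G N M A σ u ∨
          c5 G N M A σ u + 1 < c5 G N M A σ v))) := by
    intro u v huv
    by_cases hu : u ∈ A <;> by_cases hv : v ∈ A
    · refine Or.inl ⟨hA huv hu hv, ?_⟩
      have h1 := hA2 u hu; have h2 := hA2 v hv; omega
    · exact hABcase u v hu hv huv
    · have h := hABcase v u hv hu huv.symm
      rw [show s(v, u) = s(u, v) from Sym2.eq_swap] at h
      rcases h with ⟨h1, h2⟩ | ⟨h1, h2⟩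
      · exact Or.inl ⟨h1, by omega⟩
      · exact Or.inr ⟨h1, by omega⟩
    · have hiff := hσ u v huv hu hv
      by_cases hs : σ u = σ v
      · refine Or.inl ⟨hiff.mp hs, ?_⟩
        by_cases h0 : σ u = 0
        · have hb1 := hB0 u hu h0
          have hb2 := hB0 v hv (by rw [← hs]; exact h0)
          omega
        · have hb1 := hB1 u hu h0
          have hb2 := hB1 v hv (by rw [← hs]; exact h0)
          omega
      · refine Or.inr ⟨fun hn => hs (hiff.mpr hn), ?_⟩
        have hcases : (σ u = 0 ∧ σ v ≠ 0) ∨ (σ u ≠ 0 ∧ σ v = 0) := by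
          revert hs
          generalize σ u = x; generalize σ v = y
          revert x y; decide
        rcases hcases with ⟨h1, h2⟩ | ⟨h1, h2⟩
        · have hb1 := hB0 u hu h1; have hb2 := hB1 v hv h2; omega
        · have hb1 := hB1 u hu h1; have hb2 := hB0 v hv h2; omega
  refine ⟨hv5, ?_, ?_⟩
  · intro u v huv hn
    rcases key u v huv with ⟨-, h1, h2⟩ | ⟨hn', -⟩
    · rw [abs_le]; constructor <;> omega
    · exact absurd hn hn'
  · intro u v huv hn
    rcases key u v huv with ⟨hn', -⟩ | ⟨-, h⟩
    · exact absurd hn' hn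
    · rw [lt_abs]
      rcases h with h | h
      · left; omega
      · right; omega

open Classical in
lemma ncard_filter_eq_countP {α : Type*} (l : List α) (hl : l.Nodup) (N : Set α) :
    {e | e ∈ l ∧ e ∉ N}.ncard = l.countP (fun e => decide (e ∉ N)) := by
  classical
  have hset : {e | e ∈ l ∧ e ∉ N} = ↑((l.filter (fun e => decide (e ∉ N))).toFinset) := by
    ext e
    simp [List.mem_filter]
  rw [hset, Set.ncard_coe_finset, List.toFinset_card_of_nodup (hl.filter _),
    List.countP_eq_length_filter]

lemma walk_support_notA {K : SimpleGraph V} {A : Set V}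
    (hK : ∀ ⦃u v⦄, K.Adj u v → u ∉ A ∧ v ∉ A) :
    ∀ {x y : V} (r : K.Walk x y), ∀ z ∈ r.support, z ∉ A ∨ (z = y ∧ r.length = 0) := by
  intro x y r
  induction r with
  | nil => intro z hz; right; simp at hz; exact ⟨hz, rfl⟩
  | @cons a b c h r' ih =>
    intro z hz
    rw [Walk.support_cons, List.mem_cons] at hz
    rcases hz with rfl | hz
    · exact Or.inl (hK h).1
    · rcases ih z hz with hl | ⟨rfl, hlen⟩
      · exact Or.inl hl
      · have : b = z := Walk.eq_of_length_eq_zero hlen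
        exact Or.inl (this ▸ (hK h).2)


end Zigzag

/-- Lemma (zigzag): let `(N, E \ N)` be a near-far-labeling of `G` and suppose there are a
bipartition `{A, Aᶜ}` of the vertex set and a set `M` of edges such that
(i) every edge induced by `A` is near;
(ii) every cycle contained in `Aᶜ` has an even number of far edges;
(iii) `M` is an induced matching each of whose edges joins `A` to `Aᶜ`;
(iv) any two edges outside `M` joining `A` to a common vertex of `Aᶜ` have the same label.
Then `G` has a `(13,4)`-threshold-coloring, and if moreover `M = ∅`, a
`(5,1)`-threshold-coloring, with respect to `(N, E \ N)`. -/
theorem zigzag_lemma {V : Type*} (G : SimpleGraph V) (N : Set (Sym2 V))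
    (hN : N ⊆ G.edgeSet) (A : Set V) (M : Set (Sym2 V)) (hME : M ⊆ G.edgeSet)
    (hA : ∀ ⦃u v⦄, G.Adj u v → u ∈ A → v ∈ A → s(u, v) ∈ N)
    (hB : ∀ (v : V) (p : G.Walk v v), p.IsCycle → (∀ x ∈ p.support, x ∉ A) →
      Even {e : Sym2 V | e ∈ p.edges ∧ e ∉ N}.ncard)
    (hMind : ∀ e ∈ M, ∀ f ∈ M, e ≠ f → ∀ u ∈ e, ∀ v ∈ f, u ≠ v ∧ ¬ G.Adj u v)
    (hMAB : ∀ e ∈ M, ∃ a b, a ∈ A ∧ b ∉ A ∧ e = s(a, b))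
    (hiv : ∀ ⦃a a' b⦄, a ∈ A → a' ∈ A → b ∉ A → G.Adj a b → G.Adj a' b →
      s(a, b) ∉ M → s(a', b) ∉ M → (s(a, b) ∈ N ↔ s(a', b) ∈ N)) :
    (∃ c : V → ℕ, IsThresholdColoring G N 13 4 c) ∧
    (M = ∅ → ∃ c : V → ℕ, IsThresholdColoring G N 5 1 c) := by
  classical
  have hsymm : Symmetric fun u v => G.Adj u v ∧ u ∉ A ∧ v ∉ A := by
    rintro u v ⟨h, h1, h2⟩; exact ⟨h.symm, h2, h1⟩
  have hloop : Irreflexive fun u v => G.Adj u v ∧ u ∉ A ∧ v ∉ A := by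
    rintro v ⟨h, -, -⟩; exact G.loopless.irrefl v h
  set K : SimpleGraph V := ⟨fun u v => G.Adj u v ∧ u ∉ A ∧ v ∉ A, ⟨hsymm⟩, ⟨hloop⟩⟩ with hKdef
  have hKadj : ∀ ⦃u v⦄, K.Adj u v → u ∉ A ∧ v ∉ A := by
    intro u v h; exact ⟨h.2.1, h.2.2⟩
  have hle : K ≤ G := by intro u v h; exact h.1
  have hcyc : ∀ (w : V) (p : K.Walk w w), p.IsCycle → Even (Zigzag.fc N p) := by
    intro w p hp
    have hsubE : ∀ e ∈ p.edges, e ∈ G.edgeSet := fun e he =>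
      SimpleGraph.edgeSet_mono hle (p.edges_subset_edgeSet he)
    have hq : (p.transfer G hsubE).IsCycle := hp.transfer hsubE
    have hnn : p.length ≠ 0 := by
      have := hp.three_le_length; omega
    have hsup : ∀ x ∈ (p.transfer G hsubE).support, x ∉ A := by
      intro x hx
      rw [SimpleGraph.Walk.support_transfer] at hx
      rcases Zigzag.walk_support_notA hKadj p x hx with h | ⟨-, hlen⟩
      · exact h
      · exact absurd hlen hnn
    have heven := hB w (p.transfer G hsubE) hq hsup
    rw [SimpleGraph.Walk.edges_transfer] at heven
    have hnd : p.edges.Nodup := by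
      have := hq.isCircuit.isTrail.edges_nodup
      rwa [SimpleGraph.Walk.edges_transfer] at this
    rw [Zigzag.ncard_filter_eq_countP p.edges hnd N] at heven
    exact heven
  obtain ⟨σ, hσK⟩ := Zigzag.exists_sign N hcyc
  have hσ : ∀ u v : V, G.Adj u v → u ∉ A → v ∉ A → (σ u = σ v ↔ s(u, v) ∈ N) :=
    fun u v h h1 h2 => hσK u v ⟨h, h1, h2⟩
  exact ⟨⟨_, Zigzag.c13_works G N A M hME hA hMind hMAB hiv σ hσ⟩,
    fun hM => ⟨_, Zigzag.c5_works G N A M hM hA hiv σ hσ⟩⟩
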